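/- arXiv:1102.3984 — 2 statements merged into one kernel-verified Lean document; each statement's English description precedes it below -/
import Mathlib

section
/- Let k be a field of characteristic p > 0, and let S be a finite set of pairwise inequivalent nontrivial rank-1 valuations of k (valuations with value group contained in the positive reals). For each v ∈ S let k_v denote the completion of k with respect to v. Let f(T) = T + b_1 T^p + b_2 T^{p^2} + ... + b_m T^{p^m} be a p-polynomial with coefficients b_1, ..., b_m ∈ k. Then the canonical map k/f(k) → ∏_{v∈S} k_v/f(k_v) is surjective; that is, for every family (x_v)_{v∈S} with x_v ∈ k_v, there exists x ∈ k such that for every v ∈ S one has x − x_v ∈ f(k_v). -/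
/-- An absolute value (rank-1 valuation) is nonarchimedean if it satisfies the
ultrametric inequality. -/
def AbsoluteValue.IsNonarch {k : Type} [Field k] (v : AbsoluteValue k ℝ) : Prop :=
  ∀ x y : k, v (x + y) ≤ max (v x) (v y)

/-- An absolute value is nontrivial if it takes a value `≠ 1` on some nonzero element. -/
def AbsoluteValue.IsNontrivial' {k : Type} [Field k] (v : AbsoluteValue k ℝ) : Prop :=
  ∃ x : k, x ≠ 0 ∧ v x ≠ 1

/-- Two absolute values on `k` are equivalent (induce the same topology) iff one is a
positive real power of the other. -/
def AbsoluteValue.IsEquivalent {k : Type} [Field k] (v w : AbsoluteValue k ℝ) : Prop :=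
  ∃ r : ℝ, 0 < r ∧ ∀ x : k, w x = v x ^ r

open Filter Finset

variable {k : Type} [Field k]

lemma nonarch_eq {v : AbsoluteValue k ℝ} (hna : v.IsNonarch) {a b : k}
    (h : v b < v a) : v (a + b) = v a := by
  refine le_antisymm ((hna a b).trans_eq (max_eq_left h.le)) ?_
  have h2 : v a = v (a + b + -b) := by ring_nf
  rw [h2]
  rcases le_max_iff.1 (hna (a + b) (-b)) with h3 | h3
  · exact h2 ▸ h3
  · rw [v.map_neg] at h3
    exact absurd (h2 ▸ h3) (not_le.2 h)

lemma exists_one_lt {v : AbsoluteValue k ℝ} (hv : v.IsNontrivial') : ∃ z : k, 1 < v z := by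
  obtain ⟨x, hx0, hx1⟩ := hv
  rcases hx1.lt_or_gt with h | h
  · exact ⟨x⁻¹, by rw [map_inv₀]; exact (one_lt_inv₀ (v.pos hx0)).2 h⟩
  · exact ⟨x, h⟩

lemma exists_lt_one {v : AbsoluteValue k ℝ} (hv : v.IsNontrivial') :
    ∃ x : k, x ≠ 0 ∧ v x < 1 := by
  obtain ⟨x, hx0, hx1⟩ := hv
  rcases hx1.lt_or_gt with h | h
  · exact ⟨x, hx0, h⟩
  · refine ⟨x⁻¹, inv_ne_zero hx0, ?_⟩
    rw [map_inv₀]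
    exact inv_lt_one_of_one_lt₀ h

lemma equiv_of_imp {v w : AbsoluteValue k ℝ} (hv : v.IsNontrivial')
    (h : ∀ x : k, v x < 1 → w x < 1) : v.IsEquivalent w := by
  obtain ⟨x0, hx0ne, hx0lt⟩ := exists_lt_one hv
  have hv0pos : 0 < v x0 := v.pos hx0ne
  have hw0pos : 0 < w x0 := w.pos hx0ne
  set a0 := Real.log (v x0) with ha0def
  set b0 := Real.log (w x0) with hb0def
  have ha0 : a0 < 0 := Real.log_neg hv0pos hx0lt
  have hb0 : b0 < 0 := Real.log_neg hw0pos (h x0 hx0lt)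
  have hr : 0 < b0 / a0 := div_pos_iff.2 (Or.inr ⟨hb0, ha0⟩)
  refine ⟨b0 / a0, hr, fun x => ?_⟩
  rcases eq_or_ne x 0 with rfl | hx
  · rw [map_zero, map_zero, Real.zero_rpow hr.ne']
  -- key implication
  have key : ∀ y : k, y ≠ 0 → ∀ mz : ℤ, ∀ nn : ℕ, 0 < nn →
      (nn : ℝ) * Real.log (v y) < mz * a0 → (nn : ℝ) * Real.log (w y) < mz * b0 := by
    intro y hy mz nn hnn hlt
    have hel : y ^ (nn : ℤ) * x0 ^ (-mz) ≠ 0 :=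
      mul_ne_zero (zpow_ne_zero _ hy) (zpow_ne_zero _ hx0ne)
    have hcomp : ∀ u : AbsoluteValue k ℝ, u y ≠ 0 → u x0 ≠ 0 →
        Real.log (u (y ^ (nn : ℤ) * x0 ^ (-mz))) =
          (nn : ℝ) * Real.log (u y) - mz * Real.log (u x0) := by
      intro u huy hux0
      rw [map_mul, map_zpow₀, map_zpow₀,
        Real.log_mul (zpow_ne_zero _ huy) (zpow_ne_zero _ hux0),
        Real.log_zpow, Real.log_zpow]
      push_cast
      ring
    have hvlt : v (y ^ (nn : ℤ) * x0 ^ (-mz)) < 1 := by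
      rw [← Real.log_neg_iff (v.pos hel), hcomp v (v.pos hy).ne' hv0pos.ne']
      linarith
    have := h _ hvlt
    rw [← Real.log_neg_iff (w.pos hel), hcomp w (w.pos hy).ne' hw0pos.ne'] at this
    linarith
  set A := Real.log (v x) with hA
  set B := Real.log (w x) with hB
  -- show A / a0 = B / b0
  have main : A / a0 = B / b0 := by
    by_contra hne
    rcases lt_or_gt_of_ne hne with hlt | hlt
    · obtain ⟨q, hq1, hq2⟩ := exists_rat_btwn hlt
      -- A/a0 < q : gives q * a0 < A, i.e. q.num * a0 < q.den * A
      have h1 : (q : ℝ) * a0 < A := (div_lt_iff_of_neg ha0).1 hq1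
      have h2 : (q.num : ℝ) * a0 < (q.den : ℝ) * A := by
        have hden : (0 : ℝ) < q.den := by exact_mod_cast q.pos
        have : ((q.num : ℝ) / q.den) * a0 < A := by rw [← Rat.cast_def]; exact h1
        calc (q.num : ℝ) * a0 = ((q.num : ℝ) / q.den * a0) * q.den := by field_simp
          _ < A * q.den := by exact mul_lt_mul_of_pos_right this hden
          _ = (q.den : ℝ) * A := by ring
      -- apply key to x⁻¹ with -q.num
      have h3 := key x⁻¹ (inv_ne_zero hx) (-q.num) q.den q.pos
      rw [map_inv₀, map_inv₀, Real.log_inv, Real.log_inv] at h3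
      have h4 : (q.den : ℝ) * (-A) < (-q.num : ℤ) * a0 := by push_cast; linarith
      have h5 := h3 h4
      -- gives q.den * (-B) < -q.num * b0, i.e. q.num * b0 < q.den * B, i.e. q * b0 < B
      have h6 : (q : ℝ) * b0 < B := by
        have hden : (0 : ℝ) < q.den := by exact_mod_cast q.pos
        rw [Rat.cast_def]
        rw [div_mul_eq_mul_div, div_lt_iff₀ hden]
        push_cast at h5 ⊢
        linarith
      have : B / b0 < q := (div_lt_iff_of_neg hb0).2 h6
      linarith
    · obtain ⟨q, hq1, hq2⟩ := exists_rat_btwn hlt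
      -- q < A/a0 : gives A < q * a0
      have h1 : A < (q : ℝ) * a0 := (lt_div_iff_of_neg ha0).1 hq2
      have hden : (0 : ℝ) < q.den := by exact_mod_cast q.pos
      have h2 : (q.den : ℝ) * A < (q.num : ℝ) * a0 := by
        have : A < ((q.num : ℝ) / q.den) * a0 := by rw [← Rat.cast_def]; exact h1
        calc (q.den : ℝ) * A = A * q.den := by ring
          _ < ((q.num : ℝ) / q.den * a0) * q.den := mul_lt_mul_of_pos_right this hden
          _ = (q.num : ℝ) * a0 := by field_simp
      have h3 := key x hx q.num q.den q.pos (by push_cast; linarith)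
      have h6 : B < (q : ℝ) * b0 := by
        rw [Rat.cast_def, div_mul_eq_mul_div, lt_div_iff₀ hden]
        push_cast at h3 ⊢
        linarith
      have : (q : ℝ) < B / b0 := (lt_div_iff_of_neg hb0).2 h6
      linarith
  -- conclude
  have hvx : 0 < v x := v.pos hx
  rw [Real.rpow_def_of_pos hvx]
  have hBval : A * (b0 / a0) = B := by
    have h' := main
    rw [div_eq_div_iff ha0.ne hb0.ne] at h'
    field_simp [ha0.ne]
    linarith
  rw [← hA, hBval, Real.exp_log (w.pos hx)]

lemma nonarch_one_add_high {v : AbsoluteValue k ℝ} (hna : v.IsNonarch) {z : k}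
    (hz : 1 < v z) {t : ℕ} (ht : 1 ≤ t) : v (1 + z ^ t) = v z ^ t := by
  rw [add_comm, ← map_pow]
  exact nonarch_eq hna (by rw [map_one, map_pow]; exact one_lt_pow₀ hz (by omega))

lemma nonarch_one_add_low {v : AbsoluteValue k ℝ} (hna : v.IsNonarch) {z : k}
    (hz : v z < 1) (t : ℕ) (ht : 1 ≤ t) : v (1 + z ^ t) = 1 := by
  have : v (z ^ t) < v 1 := by
    rw [map_one, map_pow]
    exact pow_lt_one₀ (v.nonneg z) hz (by omega)
  rw [nonarch_eq hna this, map_one]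

lemma exists_sep_pair {v w : AbsoluteValue k ℝ} (hv : v.IsNontrivial') (hw : w.IsNontrivial')
    (h1 : ¬ v.IsEquivalent w) (h2 : ¬ w.IsEquivalent v) : ∃ z : k, 1 < v z ∧ w z < 1 := by
  have e1 : ∃ x : k, v x < 1 ∧ 1 ≤ w x := by
    by_contra hc; push_neg at hc
    exact h1 (equiv_of_imp hv fun x hx => hc x hx)
  have e2 : ∃ y : k, w y < 1 ∧ 1 ≤ v y := by
    by_contra hc; push_neg at hc
    exact h2 (equiv_of_imp hw fun x hx => hc x hx)
  obtain ⟨x, hx1, hx2⟩ := e1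
  obtain ⟨y, hy1, hy2⟩ := e2
  have hxne : x ≠ 0 := fun h => by rw [h, map_zero] at hx2; linarith
  refine ⟨y / x, ?_, ?_⟩
  · rw [map_div₀]
    have hvx : 0 < v x := v.pos hxne
    rw [lt_div_iff₀ hvx, one_mul]
    exact lt_of_lt_of_le hx1 hy2
  · rw [map_div₀]
    calc w y / w x ≤ w y := div_le_self (w.nonneg y) hx2
    _ < 1 := hy1

lemma exists_sep {n : ℕ} (v : Fin n → AbsoluteValue k ℝ)
    (hna : ∀ i, (v i).IsNonarch) (hnt : ∀ i, (v i).IsNontrivial')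
    (hpair : ∀ i j, i ≠ j → ¬ (v i).IsEquivalent (v j))
    (i : Fin n) (S : Finset (Fin n)) (hi : i ∉ S) :
    ∃ z : k, 1 < v i z ∧ ∀ j ∈ S, v j z < 1 := by
  induction S using Finset.induction_on with
  | empty => simpa using exists_one_lt (hnt i)
  | @insert a s ha ih =>
    have hia : i ≠ a := fun h => hi (h ▸ Finset.mem_insert_self a s)
    have his : i ∉ s := fun h => hi (Finset.mem_insert_of_mem h)
    obtain ⟨z, hz1, hz2⟩ := ih his
    obtain ⟨w, hw1, hw2⟩ := exists_sep_pair (hnt i) (hnt a) (hpair i a hia) (hpair a i hia.symm)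
    have hev : ∀ᶠ t : ℕ in atTop, ∀ j ∈ s, (v j z) ^ t * v j w < 1 := by
      rw [eventually_all_finset]
      intro j hj
      have h0 : Tendsto (fun t : ℕ => (v j z) ^ t * v j w) atTop (nhds (0 * v j w)) :=
        (tendsto_pow_atTop_nhds_zero_of_lt_one ((v j).nonneg z) (hz2 j hj)).mul_const _
      rw [zero_mul] at h0
      exact h0.eventually_lt_const one_pos
    rcases lt_trichotomy (v a z) 1 with hcase | hcase | hcase
    · refine ⟨z, hz1, fun j hj => ?_⟩
      rcases Finset.mem_insert.1 hj with rfl | hj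
      exacts [hcase, hz2 j hj]
    · obtain ⟨t, ht⟩ := hev.exists
      refine ⟨z ^ t * w, ?_, fun j hj => ?_⟩
      · rw [map_mul, map_pow]
        calc (1:ℝ) < v i w := hw1
        _ = 1 * v i w := (one_mul _).symm
        _ ≤ (v i z) ^ t * v i w :=
            mul_le_mul_of_nonneg_right (one_le_pow₀ hz1.le) ((v i).nonneg w)
      · rcases Finset.mem_insert.1 hj with rfl | hj
        · rw [map_mul, map_pow, hcase, one_pow, one_mul]; exact hw2
        · rw [map_mul, map_pow]; exact ht j hj
    · obtain ⟨t, ht, ht1⟩ := (hev.and (eventually_ge_atTop 1)).exists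
      refine ⟨z ^ t / (1 + z ^ t) * w, ?_, fun j hj => ?_⟩
      · rw [map_mul, map_div₀, map_pow, nonarch_one_add_high (hna i) hz1 ht1]
        rw [div_self (by positivity : (v i z) ^ t ≠ 0), one_mul]
        exact hw1
      · rcases Finset.mem_insert.1 hj with rfl | hj
        · rw [map_mul, map_div₀, map_pow, nonarch_one_add_high (hna j) hcase ht1]
          rw [div_self (by positivity : (v j z) ^ t ≠ 0), one_mul]
          exact hw2
        · rw [map_mul, map_div₀, map_pow, nonarch_one_add_low (hna j) (hz2 j hj) t ht1,
            div_one]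
          exact ht j hj

lemma weak_approx {n : ℕ} (v : Fin n → AbsoluteValue k ℝ)
    (hna : ∀ i, (v i).IsNonarch) (hnt : ∀ i, (v i).IsNontrivial')
    (hpair : ∀ i j, i ≠ j → ¬ (v i).IsEquivalent (v j))
    (c : Fin n → k) (ε : Fin n → ℝ) (hε : ∀ i, 0 < ε i) :
    ∃ a : k, ∀ i, v i (a - c i) < ε i := by
  rcases Nat.eq_zero_or_pos n with rfl | hn
  · exact ⟨0, fun i => i.elim0⟩
  haveI : Nonempty (Fin n) := ⟨⟨0, hn⟩⟩
  have hnR : (0:ℝ) < n := by exact_mod_cast hn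
  choose z hz1 hz2 using fun i =>
    exists_sep v hna hnt hpair i (Finset.univ.erase i) (Finset.notMem_erase i _)
  have hz2' : ∀ i j, j ≠ i → v i (z j) < 1 := fun i j hji =>
    hz2 j i (Finset.mem_erase.2 ⟨fun h => hji h.symm, Finset.mem_univ i⟩)
  set base : Fin n → Fin n → ℝ := fun i j => if j = i then (v i (z i))⁻¹ else v i (z j)
    with hbase
  have hb0 : ∀ i j, 0 ≤ base i j := by
    intro i j; rw [hbase]; dsimp only
    split
    · positivity
    · exact (v i).nonneg _
  have hb1 : ∀ i j, base i j < 1 := by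
    intro i j; rw [hbase]; dsimp only
    split
    · next h => exact inv_lt_one_of_one_lt₀ (hz1 i)
    · next h => exact hz2' i j h
  have hev : ∀ᶠ t : ℕ in atTop, ∀ i j, (base i j) ^ t * v i (c j) < ε i / n := by
    rw [Filter.eventually_all]
    intro i
    rw [Filter.eventually_all]
    intro j
    have h0 : Tendsto (fun t : ℕ => (base i j) ^ t * v i (c j)) atTop (nhds (0 * v i (c j))) :=
      (tendsto_pow_atTop_nhds_zero_of_lt_one (hb0 i j) (hb1 i j)).mul_const _
    rw [zero_mul] at h0
    have := hε i
    exact h0.eventually_lt_const (by positivity)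
  obtain ⟨t, ht, ht1⟩ := (hev.and (eventually_ge_atTop 1)).exists
  set e : Fin n → k := fun j => z j ^ t / (1 + z j ^ t) with he
  refine ⟨∑ j, e j * c j, fun i => ?_⟩
  have hsplit : (∑ j, e j * c j) - c i = ∑ j, (e j * c j - if j = i then c i else 0) := by
    rw [Finset.sum_sub_distrib, Finset.sum_ite_eq' Finset.univ i (fun _ => c i)]
    simp
  rw [hsplit]
  have hterm : ∀ j, v i (e j * c j - if j = i then c i else 0) ≤ (base i j) ^ t * v i (c j) := by
    intro j
    rcases eq_or_ne j i with rfl | hji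
    · rw [if_pos rfl]
      have hne : (1 : k) + z j ^ t ≠ 0 := by
        intro h0
        have h1 := nonarch_one_add_high (hna j) (hz1 j) ht1
        rw [h0, map_zero] at h1
        have h2 : (0:ℝ) < v j (z j) ^ t := pow_pos (zero_lt_one.trans (hz1 j)) t
        rw [← h1] at h2
        exact lt_irrefl _ h2
      have hrw : e j * c j - c j = -(1 / (1 + z j ^ t)) * c j := by
        rw [he]; dsimp only; field_simp; ring
      rw [hrw, map_mul, (v j).map_neg, map_div₀, map_one,
        nonarch_one_add_high (hna j) (hz1 j) ht1, one_div, ← inv_pow, hbase]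
      simp
    · rw [if_neg hji, sub_zero, map_mul, he]
      dsimp only
      rw [map_div₀, map_pow, nonarch_one_add_low (hna i) (hz2' i j hji) t ht1, div_one,
        hbase]
      dsimp only
      rw [if_neg hji]
  calc v i (∑ j, (e j * c j - if j = i then c i else 0))
      ≤ ∑ j, v i (e j * c j - if j = i then c i else 0) := (v i).sum_le _ _
    _ ≤ ∑ j, (base i j) ^ t * v i (c j) := Finset.sum_le_sum fun j _ => hterm j
    _ < ∑ _j : Fin n, ε i / n := Finset.sum_lt_sum_of_nonempty Finset.univ_nonempty
        fun j _ => ht i j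
    _ = ε i := by
        rw [Finset.sum_const, Finset.card_univ, Fintype.card_fin, nsmul_eq_mul]
        field_simp

lemma ppoly_image_open {K : Type} [NormedField K] [CompleteSpace K] {m : ℕ} (b' : Fin m → K)
    (e : Fin m → ℕ) (he : ∀ j, 2 ≤ e j) :
    ∃ ε : ℝ, 0 < ε ∧ ∀ z : K, ‖z‖ < ε → ∃ y : K, z = y + ∑ j, b' j * y ^ e j := by
  classical
  set g : K → K := fun y => ∑ j, b' j * y ^ e j with hg
  set C : ℝ := ∑ j, ‖b' j‖ * e j with hCdef
  have hC : 0 ≤ C := Finset.sum_nonneg fun j _ => by positivity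
  set r : ℝ := min 1 (1 / (2 * (C + 1))) with hrdef
  have hr0 : 0 < r := lt_min one_pos (by positivity)
  have hr1 : r ≤ 1 := min_le_left _ _
  have hCr : C * r ≤ 1 / 2 := by
    have h1 : r ≤ 1 / (2 * (C + 1)) := min_le_right _ _
    have h2 : C * r ≤ C * (1 / (2 * (C + 1))) := mul_le_mul_of_nonneg_left h1 hC
    refine h2.trans ?_
    rw [mul_one_div, div_le_div_iff₀ (by positivity) two_pos]
    nlinarith
  have key : ∀ y y' : K, ‖y‖ ≤ r → ‖y'‖ ≤ r → ‖g y - g y'‖ ≤ 1 / 2 * ‖y - y'‖ := by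
    intro y y' hy hy'
    have hgdiff : g y - g y' = ∑ j, b' j * (y ^ e j - y' ^ e j) := by
      rw [hg]; dsimp only
      rw [← Finset.sum_sub_distrib]
      exact Finset.sum_congr rfl fun j _ => by ring
    have hpow : ∀ j : Fin m, ‖y ^ e j - y' ^ e j‖ ≤ (e j : ℝ) * r * ‖y - y'‖ := by
      intro j
      have hfac := geom_sum₂_mul y y' (e j)
      rw [← hfac, norm_mul]
      have hsum : ‖∑ i ∈ Finset.range (e j), y ^ i * y' ^ (e j - 1 - i)‖ ≤ (e j : ℝ) * r := by
        calc ‖∑ i ∈ Finset.range (e j), y ^ i * y' ^ (e j - 1 - i)‖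
            ≤ ∑ i ∈ Finset.range (e j), ‖y ^ i * y' ^ (e j - 1 - i)‖ := norm_sum_le _ _
          _ ≤ ∑ _i ∈ Finset.range (e j), r := by
              refine Finset.sum_le_sum fun i hi => ?_
              rw [norm_mul, norm_pow, norm_pow]
              have hi' : i ≤ e j - 1 := by
                have := Finset.mem_range.1 hi; omega
              calc ‖y‖ ^ i * ‖y'‖ ^ (e j - 1 - i)
                  ≤ r ^ i * r ^ (e j - 1 - i) :=
                    mul_le_mul (pow_le_pow_left₀ (norm_nonneg _) hy i)
                      (pow_le_pow_left₀ (norm_nonneg _) hy' _) (by positivity) (by positivity)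
                _ = r ^ (e j - 1) := by rw [← pow_add]; congr 1; omega
                _ ≤ r ^ 1 := pow_le_pow_of_le_one hr0.le hr1 (by have := he j; omega)
                _ = r := pow_one r
          _ = (e j : ℝ) * r := by rw [Finset.sum_const, Finset.card_range, nsmul_eq_mul]
      exact mul_le_mul_of_nonneg_right hsum (norm_nonneg _)
    calc ‖g y - g y'‖ = ‖∑ j, b' j * (y ^ e j - y' ^ e j)‖ := by rw [hgdiff]
      _ ≤ ∑ j, ‖b' j * (y ^ e j - y' ^ e j)‖ := norm_sum_le _ _
      _ ≤ ∑ j, ‖b' j‖ * ((e j : ℝ) * r * ‖y - y'‖) := by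
          refine Finset.sum_le_sum fun j _ => ?_
          rw [norm_mul]
          exact mul_le_mul_of_nonneg_left (hpow j) (norm_nonneg _)
      _ = C * r * ‖y - y'‖ := by
          rw [hCdef, Finset.sum_mul, Finset.sum_mul]
          exact Finset.sum_congr rfl fun j _ => by ring
      _ ≤ 1 / 2 * ‖y - y'‖ := mul_le_mul_of_nonneg_right hCr (norm_nonneg _)
  have hg0 : g 0 = 0 := by
    rw [hg]; dsimp only
    refine Finset.sum_eq_zero fun j _ => ?_
    rw [zero_pow (by have := he j; omega), mul_zero]
  refine ⟨r / 2, by positivity, fun z hz => ?_⟩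
  set B := Metric.closedBall (0 : K) r with hB
  haveI : CompleteSpace B := Metric.isClosed_closedBall.completeSpace_coe
  haveI : Nonempty B := ⟨⟨0, Metric.mem_closedBall_self hr0.le⟩⟩
  have hmem : ∀ y : B, ‖z - g y.1‖ ≤ r := by
    intro y
    have hy : ‖y.1‖ ≤ r := mem_closedBall_zero_iff.1 y.2
    have h1 : ‖g y.1‖ ≤ 1 / 2 * ‖y.1‖ := by
      have := key y.1 0 hy (by simpa using hr0.le)
      simpa [hg0] using this
    calc ‖z - g y.1‖ ≤ ‖z‖ + ‖g y.1‖ := norm_sub_le _ _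
      _ ≤ r / 2 + 1 / 2 * r := by
          have := hz.le
          have h2 : 1 / 2 * ‖y.1‖ ≤ 1 / 2 * r := by linarith
          linarith
      _ = r := by ring
  set φ : B → B := fun y => ⟨z - g y.1, mem_closedBall_zero_iff.2 (hmem y)⟩ with hφ
  have contr : ContractingWith (1/2 : NNReal) φ := by
    constructor
    · rw [← NNReal.coe_lt_coe]; norm_num
    · refine LipschitzWith.of_dist_le_mul fun a c => ?_
      rw [Subtype.dist_eq]
      have h1 : dist (φ a).1 (φ c).1 = ‖g c.1 - g a.1‖ := by
        rw [hφ]; dsimp only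
        rw [dist_eq_norm]
        congr 1
        ring
      rw [h1]
      have h2 := key c.1 a.1 (mem_closedBall_zero_iff.1 c.2) (mem_closedBall_zero_iff.1 a.2)
      have h3 : dist a c = ‖c.1 - a.1‖ := by
        rw [Subtype.dist_eq, dist_eq_norm, ← norm_neg]
        congr 1
        ring
      rw [h3]
      have : ((1/2 : NNReal) : ℝ) = 1/2 := by norm_num
      rw [this]
      exact h2
  set y := ContractingWith.fixedPoint φ contr with hy
  have hfix : φ y = y := contr.fixedPoint_isFixedPt
  refine ⟨y.1, ?_⟩
  have h4 : z - g y.1 = y.1 := congrArg Subtype.val hfix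
  exact sub_eq_iff_eq_add.1 h4

/-- Weak approximation for the images of `p`-polynomials: let `k` be a field of
characteristic `p > 0` and let `v 1, …, v n` be finitely many pairwise inequivalent
nontrivial rank-1 valuations of `k`, with completions `K i` (complete normed fields in
which `k` embeds isometrically and densely).  Let
`f(T) = T + b 1 * T^p + ⋯ + b m * T^(p^m)` be a `p`-polynomial with coefficients in `k`.
Then the canonical map `k/f(k) → ∏ i, K i / f(K i)` is surjective: for every family
`(x i)` with `x i ∈ K i` there is `a ∈ k` with `a - x i ∈ f(K i)` for all `i`. -/
theorem pPolynomial_weak_approximation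
    (p : ℕ) [Fact p.Prime] (k : Type) [Field k] [CharP k p]
    (n : ℕ) (v : Fin n → AbsoluteValue k ℝ)
    (hna : ∀ i, (v i).IsNonarch) (hnt : ∀ i, (v i).IsNontrivial')
    (hpairwise : ∀ i j, i ≠ j → ¬ (v i).IsEquivalent (v j))
    (K : Fin n → Type) [∀ i, NormedField (K i)] [∀ i, CompleteSpace (K i)]
    (emb : ∀ i, k →+* K i)
    (hisom : ∀ i, ∀ x : k, ‖emb i x‖ = v i x)
    (hdense : ∀ i, DenseRange (emb i))
    (m : ℕ) (b : Fin m → k)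
    (x : ∀ i, K i) :
    ∃ a : k, ∀ i, ∃ y : K i,
      emb i a - x i = y + ∑ j : Fin m, emb i (b j) * y ^ p ^ (j.1 + 1) := by
  have hsolv : ∀ i, ∃ ε : ℝ, 0 < ε ∧ ∀ z : K i, ‖z‖ < ε →
      ∃ y : K i, z = y + ∑ j : Fin m, emb i (b j) * y ^ p ^ (j.1 + 1) := by
    intro i
    exact ppoly_image_open (fun j => emb i (b j)) (fun j => p ^ (j.1 + 1))
      (fun j => le_trans (Fact.out : p.Prime).two_le (Nat.le_self_pow (by omega) p))
  choose ε hε hsol using hsolv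
  have hden : ∀ i, ∃ c : k, dist (x i) (emb i c) < ε i / 2 := fun i =>
    (hdense i).exists_dist_lt (x i) (by have := hε i; positivity)
  choose c hc using hden
  obtain ⟨a, ha⟩ := weak_approx v hna hnt hpairwise c (fun i => ε i / 2)
    (fun i => by have := hε i; positivity)
  refine ⟨a, fun i => ?_⟩
  have h2 : ‖emb i a - emb i (c i)‖ = v i (a - c i) := by rw [← map_sub, hisom]
  have h1 : ‖emb i a - x i‖ < ε i := by
    calc ‖emb i a - x i‖ = ‖(emb i a - emb i (c i)) + (emb i (c i) - x i)‖ := by ring_nf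
      _ ≤ ‖emb i a - emb i (c i)‖ + ‖emb i (c i) - x i‖ := norm_add_le _ _
      _ < ε i / 2 + ε i / 2 := by
          have h3 : ‖emb i (c i) - x i‖ < ε i / 2 := by
            rw [← dist_eq_norm, dist_comm]
            exact hc i
          have h4 := ha i
          rw [← h2] at h4
          exact add_lt_add h4 h3
      _ = ε i := by ring
  exact hsol i _ h1
end

section
/- Let K be a field of characteristic p > 0 that is complete with respect to a nontrivial rank-1 valuation, and let f(T) = T + b_1 T^p + b_2 T^{p^2} + ... + b_m T^{p^m} be a p-polynomial with coefficients b_1, ..., b_m ∈ K. Then the image f(K) = {f(x) : x ∈ K} is an open additive subgroup of K (open with respect to the valuation topology). -/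
open scoped NNReal

private lemma pow_le_mul_self_aux {t c : ℝ} (ht : 0 ≤ t) (htc : t ≤ c) (hc1 : c ≤ 1)
    {n : ℕ} (hn : 2 ≤ n) : t ^ n ≤ c * t := by
  have h1 : t ^ n = t ^ (n - 1) * t := by
    conv_lhs => rw [show n = (n - 1) + 1 by omega, pow_succ]
  rw [h1]
  have h2 : t ^ (n - 1) ≤ c ^ (n - 1) := pow_le_pow_left₀ ht htc _
  have h3 : c ^ (n - 1) ≤ c := pow_le_of_le_one (le_trans ht htc) hc1 (by omega)
  nlinarith [pow_nonneg (le_trans ht htc) (n - 1)]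

/-- Let `K` be a field of characteristic `p > 0`, complete with respect to a nontrivial
rank-1 valuation (encoded as a complete normed field whose norm is multiplicative,
nonarchimedean and nontrivial), and let
`f(T) = T + b 1 * T^p + ⋯ + b m * T^(p^m)` be a `p`-polynomial with coefficients in `K`.
Then the image `f(K)` is an open additive subgroup of `K`. -/
theorem pPolynomial_image_isOpen_addSubgroup
    (p : ℕ) [Fact p.Prime] (K : Type) [NormedField K] [CompleteSpace K] [CharP K p]
    (hna : ∀ x y : K, ‖x + y‖ ≤ max ‖x‖ ‖y‖)
    (hnt : ∃ x : K, x ≠ 0 ∧ ‖x‖ ≠ 1)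
    (m : ℕ) (b : Fin m → K) :
    ∃ H : AddSubgroup K,
      (H : Set K) = Set.range (fun x : K => x + ∑ j : Fin m, b j * x ^ p ^ (j.1 + 1)) ∧
      IsOpen (H : Set K) := by
  classical
  set f : K → K := fun x => x + ∑ j : Fin m, b j * x ^ p ^ (j.1 + 1) with hf
  have hp2 : 2 ≤ p := (Fact.out : p.Prime).two_le
  have hq2 : ∀ j : Fin m, 2 ≤ p ^ (j.1 + 1) := fun j =>
    le_trans hp2 (Nat.le_self_pow (Nat.succ_ne_zero _) p)
  -- additivity of f
  have hzero : f 0 = 0 := by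
    simp only [hf]
    rw [Finset.sum_eq_zero, add_zero]
    intro j _
    rw [zero_pow (by have := hq2 j; omega), mul_zero]
  have hadd : ∀ x y : K, f (x + y) = f x + f y := by
    intro x y
    simp only [hf]
    have : ∀ j ∈ (Finset.univ : Finset (Fin m)), b j * (x + y) ^ p ^ (j.1 + 1)
        = b j * x ^ p ^ (j.1 + 1) + b j * y ^ p ^ (j.1 + 1) := by
      intro j _
      rw [add_pow_char_pow, mul_add]
    rw [Finset.sum_congr rfl this, Finset.sum_add_distrib]
    ring
  have hneg : ∀ x : K, f (-x) = -f x := by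
    intro x
    have h := hadd x (-x)
    rw [add_neg_cancel, hzero] at h
    exact eq_neg_of_add_eq_zero_right h.symm
  set H : AddSubgroup K :=
    { carrier := Set.range f
      zero_mem' := ⟨0, hzero⟩
      add_mem' := by
        rintro _ _ ⟨x, rfl⟩ ⟨y, rfl⟩
        exact ⟨x + y, hadd x y⟩
      neg_mem' := by
        rintro _ ⟨x, rfl⟩
        exact ⟨-x, hneg x⟩ } with hH
  refine ⟨H, rfl, ?_⟩
  -- choose a small radius ε
  set S : ℝ := ∑ j : Fin m, ‖b j‖ with hS
  have hS0 : 0 ≤ S := Finset.sum_nonneg fun j _ => norm_nonneg _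
  set C : ℝ := 1 + S with hC
  have hC0 : 0 < C := by positivity
  set ε : ℝ := min (1 / 2) (1 / (4 * C)) with hε
  have hε0 : 0 < ε := by
    apply lt_min <;> positivity
  have hε1 : 2 * ε ≤ 1 := by
    have := min_le_left (1 / 2) (1 / (4 * C))
    rw [← hε] at this; linarith
  have hεC : S * (2 * ε) ≤ 1 / 2 := by
    have h1 : ε ≤ 1 / (4 * C) := min_le_right _ _
    have h2 : S * (2 * ε) ≤ S * (2 * (1 / (4 * C))) := by
      apply mul_le_mul_of_nonneg_left _ hS0
      linarith
    have h3 : S * (2 * (1 / (4 * C))) = S / (2 * C) := by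
      field_simp; ring
    have h4 : S / (2 * C) ≤ C / (2 * C) := by
      apply div_le_div_of_nonneg_right _ (by positivity)
      · linarith
    have h5 : C / (2 * C) = 1 / 2 := by field_simp
    linarith
  -- the key estimate
  have key : ∀ u v : K, ‖u‖ ≤ ε → ‖v‖ ≤ ε →
      ‖∑ j : Fin m, b j * u ^ p ^ (j.1 + 1) - ∑ j : Fin m, b j * v ^ p ^ (j.1 + 1)‖
        ≤ S * (2 * ε) * ‖u - v‖ := by
    intro u v hu hv
    have h1 : ∑ j : Fin m, b j * u ^ p ^ (j.1 + 1) - ∑ j : Fin m, b j * v ^ p ^ (j.1 + 1)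
        = ∑ j : Fin m, b j * (u - v) ^ p ^ (j.1 + 1) := by
      rw [← Finset.sum_sub_distrib]
      apply Finset.sum_congr rfl
      intro j _
      rw [sub_pow_char_pow, mul_sub]
    rw [h1]
    calc ‖∑ j : Fin m, b j * (u - v) ^ p ^ (j.1 + 1)‖
        ≤ ∑ j : Fin m, ‖b j * (u - v) ^ p ^ (j.1 + 1)‖ := norm_sum_le _ _
      _ ≤ ∑ j : Fin m, ‖b j‖ * (2 * ε * ‖u - v‖) := by
          apply Finset.sum_le_sum
          intro j _
          rw [norm_mul, norm_pow]
          apply mul_le_mul_of_nonneg_left _ (norm_nonneg _)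
          have huv : ‖u - v‖ ≤ 2 * ε := by
            calc ‖u - v‖ ≤ ‖u‖ + ‖v‖ := norm_sub_le _ _
              _ ≤ 2 * ε := by linarith
          exact pow_le_mul_self_aux (norm_nonneg _) huv hε1 (hq2 j)
      _ = S * (2 * ε) * ‖u - v‖ := by
          rw [← Finset.sum_mul]; ring
  -- the ball of radius ε/2 around 0 is contained in the range of f
  have hball : Metric.ball (0 : K) (ε / 2) ⊆ Set.range f := by
    intro y hy
    rw [Metric.mem_ball, dist_zero_right] at hy
    -- solve x = y - ∑ b j x^{q j} by contraction in the closed ball of radius ε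
    have : CompleteSpace (Metric.closedBall (0 : K) ε) :=
      (Metric.isClosed_closedBall (x := (0 : K)) (ε := ε)).completeSpace_coe
    have hBne : Nonempty (Metric.closedBall (0 : K) ε) :=
      ⟨⟨0, by simpa using hε0.le⟩⟩
    have hmem : ∀ x : Metric.closedBall (0 : K) ε,
        y - ∑ j : Fin m, b j * (x : K) ^ p ^ (j.1 + 1) ∈ Metric.closedBall (0 : K) ε := by
      intro x
      have hx : ‖(x : K)‖ ≤ ε := by
        have := x.2
        rwa [Metric.mem_closedBall, dist_zero_right] at this
      rw [Metric.mem_closedBall, dist_zero_right]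
      have h1 : ‖∑ j : Fin m, b j * (x : K) ^ p ^ (j.1 + 1)‖ ≤ S * (2 * ε) * ‖(x : K)‖ := by
        have h0 : ∑ j : Fin m, b j * (0 : K) ^ p ^ (j.1 + 1) = 0 := by
          apply Finset.sum_eq_zero
          intro j _
          rw [zero_pow (by have := hq2 j; omega), mul_zero]
        have := key (x : K) 0 hx (by simp [hε0.le])
        rw [h0, sub_zero, sub_zero] at this
        exact this
      have h2 : S * (2 * ε) * ‖(x : K)‖ ≤ (1 / 2) * ε := by
        apply mul_le_mul hεC hx (norm_nonneg _) (by norm_num)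
      calc ‖y - ∑ j : Fin m, b j * (x : K) ^ p ^ (j.1 + 1)‖
          ≤ ‖y‖ + ‖∑ j : Fin m, b j * (x : K) ^ p ^ (j.1 + 1)‖ := norm_sub_le _ _
        _ ≤ ε := by linarith
    set F : Metric.closedBall (0 : K) ε → Metric.closedBall (0 : K) ε :=
      fun x => ⟨y - ∑ j : Fin m, b j * (x : K) ^ p ^ (j.1 + 1), hmem x⟩ with hF
    have hcontr : ContractingWith (1 / 2 : ℝ≥0) F := by
      constructor
      · exact_mod_cast (by norm_num : ((1 / 2 : ℝ≥0) : ℝ) < 1)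
      · apply LipschitzWith.of_dist_le_mul
        intro u v
        have h1 : dist (F u) (F v)
            = ‖∑ j : Fin m, b j * (v : K) ^ p ^ (j.1 + 1)
                - ∑ j : Fin m, b j * (u : K) ^ p ^ (j.1 + 1)‖ := by
          rw [Subtype.dist_eq, hF, dist_eq_norm]
          congr 1
          ring
        have hu : ‖(u : K)‖ ≤ ε := by
          have := u.2; rwa [Metric.mem_closedBall, dist_zero_right] at this
        have hv : ‖(v : K)‖ ≤ ε := by
          have := v.2; rwa [Metric.mem_closedBall, dist_zero_right] at this
        have h2 := key (v : K) (u : K) hv hu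
        have h3 : ‖(v : K) - (u : K)‖ = dist u v := by
          rw [Subtype.dist_eq, dist_eq_norm, norm_sub_rev]
        rw [h1]
        calc ‖∑ j : Fin m, b j * (v : K) ^ p ^ (j.1 + 1)
                - ∑ j : Fin m, b j * (u : K) ^ p ^ (j.1 + 1)‖
            ≤ S * (2 * ε) * ‖(v : K) - (u : K)‖ := h2
          _ ≤ (1 / 2) * dist u v := by
              rw [h3]
              apply mul_le_mul_of_nonneg_right hεC dist_nonneg
          _ = ((1 / 2 : ℝ≥0) : ℝ) * dist u v := by norm_num
    set x := ContractingWith.fixedPoint F hcontr with hx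
    have hfix : F x = x := ContractingWith.fixedPoint_isFixedPt hcontr
    refine ⟨(x : K), ?_⟩
    have h4 : y - ∑ j : Fin m, b j * (x : K) ^ p ^ (j.1 + 1) = (x : K) := by
      have := congrArg (Subtype.val) hfix
      simpa [hF] using this
    show (x : K) + ∑ j : Fin m, b j * (x : K) ^ p ^ (j.1 + 1) = y
    linear_combination -h4
  apply AddSubgroup.isOpen_of_mem_nhds H (g := 0)
  exact Filter.mem_of_superset (Metric.ball_mem_nhds 0 (by positivity)) hball
end
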